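/- Let (V, ω), (W, σ) be symplectic vector spaces, f : V → W a differentiable map, and φ : V × V × W → V × V × W a (not necessarily linear) differentiable symplectic map for the direct-sum symplectic form, with φ(x, b, r) = (x, x, f(x)) for all x ∈ V, for some fixed b ∈ V, r ∈ W. Then for every x ∈ V and v, ṽ ∈ V, -ω(v, ṽ) = σ(df_x v, df_x ṽ), and consequently dim W ≥ dim V. -/

import Mathlib

/-- Linear-space version of the cloning machine size bound: if `(V, ω)`, `(W, σ)` are
symplectic vector spaces, `φ : V × V × W → V × V × W` is a differentiable symplectic map
for the direct-sum form `ω ⊕ ω ⊕ σ`, and `φ (x, b, r) = (x, x, f x)` for all `x`, then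
`-ω v ṽ = σ (df_x v) (df_x ṽ)` for all `x, v, ṽ`, and consequently `dim W ≥ dim V`. -/
theorem cloning_machine_dim_ge_vector_space
    {V : Type*} [NormedAddCommGroup V] [NormedSpace ℝ V] [FiniteDimensional ℝ V]
    {W : Type*} [NormedAddCommGroup W] [NormedSpace ℝ W] [FiniteDimensional ℝ W]
    (ω : V →ₗ[ℝ] V →ₗ[ℝ] ℝ)
    (hωalt : ∀ v : V, ω v v = 0)
    (hωnd : ∀ v : V, (∀ w : V, ω v w = 0) → v = 0)
    (σ : W →ₗ[ℝ] W →ₗ[ℝ] ℝ)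
    (hσalt : ∀ w : W, σ w w = 0)
    (hσnd : ∀ w : W, (∀ w' : W, σ w w' = 0) → w = 0)
    (b : V) (r : W) (f : V → W)
    (φ : V × V × W → V × V × W)
    (hdiff : Differentiable ℝ φ)
    (hsymp : ∀ p u v : V × V × W,
      ω (fderiv ℝ φ p u).1 (fderiv ℝ φ p v).1 +
        ω (fderiv ℝ φ p u).2.1 (fderiv ℝ φ p v).2.1 +
        σ (fderiv ℝ φ p u).2.2 (fderiv ℝ φ p v).2.2
      = ω u.1 v.1 + ω u.2.1 v.2.1 + σ u.2.2 v.2.2)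
    (hclone : ∀ x : V, φ (x, b, r) = (x, x, f x)) :
    (∀ (x v v' : V), -(ω v v') = σ (fderiv ℝ f x v) (fderiv ℝ f x v')) ∧
      Module.finrank ℝ V ≤ Module.finrank ℝ W := by
  -- inclusion v ↦ (v, 0, 0)
  set ι : V →L[ℝ] V × V × W :=
    (ContinuousLinearMap.id ℝ V).prod (0 : V →L[ℝ] V × W) with hι
  have key : ∀ x : V,
      (∀ v : V, (fderiv ℝ φ (x, b, r)) (v, 0, 0) = (v, v, fderiv ℝ f x v)) := by
    intro x
    have hg : HasFDerivAt (fun y : V => (y, b, r)) ι x := by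
      exact (hasFDerivAt_id x).prodMk (hasFDerivAt_const (b, r) x)
    set D : V × V × W →L[ℝ] V × V × W := fderiv ℝ φ (x, b, r) with hD
    have hφ : HasFDerivAt φ D (x, b, r) := (hdiff (x, b, r)).hasFDerivAt
    have hc : HasFDerivAt (fun y : V => φ (y, b, r)) (D.comp ι) x := hφ.comp x hg
    have hc' : HasFDerivAt (fun y : V => (y, y, f y)) (D.comp ι) x := by
      have : (fun y : V => φ (y, b, r)) = fun y : V => (y, y, f y) := by
        funext y; exact hclone y
      rwa [this] at hc
    set P1 : V × V × W →L[ℝ] V := ContinuousLinearMap.fst ℝ V (V × W) with hP1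
    set P2 : V × V × W →L[ℝ] V :=
      (ContinuousLinearMap.fst ℝ V W).comp (ContinuousLinearMap.snd ℝ V (V × W)) with hP2
    set P3 : V × V × W →L[ℝ] W :=
      (ContinuousLinearMap.snd ℝ V W).comp (ContinuousLinearMap.snd ℝ V (V × W)) with hP3
    have h1 : HasFDerivAt (fun y : V => y) (P1.comp (D.comp ι)) x :=
      (P1.hasFDerivAt).comp x hc'
    have h1' : P1.comp (D.comp ι) = ContinuousLinearMap.id ℝ V :=
      h1.unique (hasFDerivAt_id x)
    have h2 : HasFDerivAt (fun y : V => y) (P2.comp (D.comp ι)) x :=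
      (P2.hasFDerivAt).comp x hc'
    have h2' : P2.comp (D.comp ι) = ContinuousLinearMap.id ℝ V :=
      h2.unique (hasFDerivAt_id x)
    have h3 : HasFDerivAt f (P3.comp (D.comp ι)) x := (P3.hasFDerivAt).comp x hc'
    have h3' : fderiv ℝ f x = P3.comp (D.comp ι) := h3.fderiv
    intro v
    have e1 : (D (v, 0, 0)).1 = v := by
      have := congrArg (fun L : V →L[ℝ] V => L v) h1'
      simpa [ι, P1, Prod.mk_zero_zero] using this
    have e2 : (D (v, 0, 0)).2.1 = v := by
      have := congrArg (fun L : V →L[ℝ] V => L v) h2'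
      simpa [ι, P2, Prod.mk_zero_zero] using this
    have e3 : (D (v, 0, 0)).2.2 = fderiv ℝ f x v := by
      rw [h3']; simp [ι, P3, Prod.mk_zero_zero]
    exact Prod.ext e1 (Prod.ext e2 e3)
  have main : ∀ (x v v' : V), -(ω v v') = σ (fderiv ℝ f x v) (fderiv ℝ f x v') := by
    intro x v v'
    have h := hsymp (x, b, r) (v, 0, 0) (v', 0, 0)
    rw [key x v, key x v'] at h
    simp only [map_zero, ContinuousLinearMap.zero_apply, LinearMap.zero_apply] at h
    -- h : ω v v' + ω v v' + σ (df v) (df v') = ω v v' (+ 0 + 0)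
    linarith [h]
  refine ⟨main, ?_⟩
  have hinj : Function.Injective (fderiv ℝ f 0) := by
    rw [injective_iff_map_eq_zero]
    intro v hv
    apply hωnd
    intro w
    have := main 0 v w
    rw [hv] at this
    simp only [map_zero, LinearMap.zero_apply] at this
    linarith
  exact LinearMap.finrank_le_finrank_of_injective
    (f := (fderiv ℝ f 0 : V →ₗ[ℝ] W)) hinj
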